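/- If r : ℝ → ℝ is defined by r(v) = 1 / sqrt(c₁ * sin(2v) - c₂ * cos(2v)) on an interval where c₁ * sin(2v) - c₂ * cos(2v) > 0, then r satisfies the differential equation 3 * (r'(v))² - r(v) * r''(v) + 2 * r(v)² = 0 on that interval. -/

import Mathlib

theorem stmt1 (c₁ c₂ A B : ℝ)
    (r : ℝ → ℝ)
    (hr : ∀ v, r v = 1 / Real.sqrt (c₁ * Real.sin (2 * v) - c₂ * Real.cos (2 * v)))
    (hpos : ∀ v ∈ Set.Ioo A B, c₁ * Real.sin (2 * v) - c₂ * Real.cos (2 * v) > 0) :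
    ∀ v ∈ Set.Ioo A B,
      3 * (deriv r v) ^ 2 - r v * deriv (deriv r) v + 2 * (r v) ^ 2 = 0 := by
  set g : ℝ → ℝ := fun w => c₁ * Real.sin (2 * w) - c₂ * Real.cos (2 * w) with hgdef
  set g' : ℝ → ℝ := fun w => 2 * c₁ * Real.cos (2 * w) + 2 * c₂ * Real.sin (2 * w) with hg'def
  have hsin : ∀ w : ℝ, HasDerivAt (fun x : ℝ => Real.sin (2 * x)) (Real.cos (2 * w) * 2) w := by
    intro w
    have h := (Real.hasDerivAt_sin (2 * w)).comp w ((hasDerivAt_id w).const_mul 2)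
    simp only [mul_one] at h; exact h
  have hcos : ∀ w : ℝ, HasDerivAt (fun x : ℝ => Real.cos (2 * x)) (-Real.sin (2 * w) * 2) w := by
    intro w
    have h := (Real.hasDerivAt_cos (2 * w)).comp w ((hasDerivAt_id w).const_mul 2)
    simp only [mul_one] at h; exact h
  have hgd : ∀ w, HasDerivAt g (g' w) w := by
    intro w
    have := ((hsin w).const_mul c₁).sub ((hcos w).const_mul c₂)
    refine this.congr_deriv ?_
    simp only [hg'def]
    ring
  have hg'd : ∀ w, HasDerivAt g' (-4 * g w) w := by
    intro w
    have := ((hcos w).const_mul (2 * c₁)).add ((hsin w).const_mul (2 * c₂))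
    refine this.congr_deriv ?_
    simp only [hgdef]
    ring
  set r1 : ℝ → ℝ := fun w => -(g' w) / (2 * Real.sqrt (g w) ^ 3) with hr1def
  have hrfun : r = fun w => (Real.sqrt (g w))⁻¹ := by
    funext w; rw [hr w, one_div]
  have hsq : ∀ w ∈ Set.Ioo A B,
      HasDerivAt (fun x => Real.sqrt (g x)) (1 / (2 * Real.sqrt (g w)) * g' w) w := by
    intro w hw
    exact (Real.hasDerivAt_sqrt (ne_of_gt (hpos w hw))).comp w (hgd w)
  have hsne : ∀ w ∈ Set.Ioo A B, Real.sqrt (g w) ≠ 0 := fun w hw =>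
    ne_of_gt (Real.sqrt_pos.mpr (hpos w hw))
  have hrd : ∀ w ∈ Set.Ioo A B, HasDerivAt r (r1 w) w := by
    intro w hw
    rw [hrfun]
    have h := (hsq w hw).inv (hsne w hw)
    refine h.congr_deriv ?_
    have hs := hsne w hw
    simp only [hr1def]
    have key : ∀ (s G : ℝ), s ≠ 0 → -G / (2 * s ^ 3) = -(1 / (2 * s) * G) / s ^ 2 := by
      intro s G hs0
      field_simp
    exact (key _ _ hs).symm
  intro v hv
  have hmem : Set.Ioo A B ∈ nhds v := isOpen_Ioo.mem_nhds hv
  have hderiv_eq : deriv r =ᶠ[nhds v] r1 :=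
    Filter.eventually_of_mem hmem (fun w hw => (hrd w hw).deriv)
  have hdd : deriv (deriv r) v = deriv r1 v := hderiv_eq.deriv_eq
  set s := Real.sqrt (g v) with hsdef
  have hs0 : 0 < s := Real.sqrt_pos.mpr (hpos v hv)
  have hs2 : s ^ 2 = g v := Real.sq_sqrt (le_of_lt (hpos v hv))
  have hs : s ≠ 0 := ne_of_gt hs0
  have hnum : HasDerivAt (fun w => -(g' w)) (4 * g v) v := by
    have := (hg'd v).neg
    refine this.congr_deriv ?_; ring
  have hden : HasDerivAt (fun w => 2 * Real.sqrt (g w) ^ 3) (3 * s * g' v) v := by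
    have := ((hsq v hv).pow 3).const_mul 2
    refine this.congr_deriv ?_
    rw [← hsdef]
    field_simp
    ring
  have hden0 : 2 * s ^ 3 ≠ 0 := by positivity
  have hr1d : HasDerivAt r1
      ((4 * g v * (2 * s ^ 3) - (-(g' v)) * (3 * s * g' v)) / (2 * s ^ 3) ^ 2) v := by
    have := hnum.div hden hden0
    exact this
  rw [hdd, hr1d.deriv, (hrd v hv).deriv, hr v]
  simp only [hr1def]
  rw [← hsdef, ← hs2]
  field_simp
  ring
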